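/- Assume δ̃(n) > 0, and let p* ∈ ℝ_{++}^n be the unique point of ℝ_{++}^n with F̃(p*) = 0. Then p* is globally asymptotically stable for the deterministic Lotka–Volterra food chain: every differentiable curve x : [0, ∞) → ℝ_{++}^n satisfying x_i'(t) = x_i(t) F̃_i(x(t)) for all t ≥ 0 and all 1 ≤ i ≤ n converges to p*, i.e. x(t) → p* as t → ∞. -/

import Mathlib

/-!
Degenerate stochastic Lotka–Volterra food chains:
`δ̃(n) > 0` iff `F̃` has a (necessarily unique) positive zero.
-/

/-- The set `A_a^b` of involutive permutations of `ℕ` that fix every point outside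
`{a, …, b}` and move every point by at most one (products of disjoint transpositions
of the form `(i i+1)` supported in `{a, …, b}`). -/
def Aset (a b : ℕ) : Set (Equiv.Perm ℕ) :=
  {σ | σ * σ = 1 ∧ (∀ j, j ∉ Finset.Icc a b → σ j = j) ∧
    ∀ j, |((σ j : ℤ)) - (j : ℤ)| ≤ 1}

/-- `S_a^b = Σ_{σ ∈ A_a^b} Π_{j=a}^{b} ã_{j,σ(j)}` (equal to `1` when `a > b`). -/
noncomputable def Ssum (ta : ℕ → ℕ → ℝ) (a b : ℕ) : ℝ :=
  ∑ᶠ σ ∈ Aset a b, ∏ j ∈ Finset.Icc a b, ta j (σ j)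

/-- `δ̃(m) = ã_{10} Π_{j=2}^{m} ã_{j,j−1} − Σ_{k=2}^{m} ã_{k0} (Π_{l=k+1}^{m} ã_{l,l−1}) S_1^{k−1}`. -/
noncomputable def deltaT (ta : ℕ → ℕ → ℝ) (m : ℕ) : ℝ :=
  ta 1 0 * ∏ j ∈ Finset.Icc 2 m, ta j (j - 1) -
    ∑ k ∈ Finset.Icc 2 m, ta k 0 * (∏ l ∈ Finset.Icc (k + 1) m, ta l (l - 1)) * Ssum ta 1 (k - 1)

/-- The drift field `F̃` of the Lotka–Volterra food chain (components indexed by `1 ≤ i ≤ n`). -/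
def Ft (n : ℕ) (ta : ℕ → ℕ → ℝ) (x : ℕ → ℝ) (i : ℕ) : ℝ :=
  if i = 1 then ta 1 0 - ta 1 1 * x 1 - ta 1 2 * x 2
  else if i = n then -ta n 0 + ta n (n - 1) * x (n - 1) - ta n n * x n
  else -ta i 0 + ta i (i - 1) * x (i - 1) - ta i i * x i - ta i (i + 1) * x (i + 1)

section LVaux

open Set Filter

/-! ### Auxiliary analysis lemmas -/

private lemma lipOn {f f' : ℝ → ℝ} {L : ℝ}
    (hd : ∀ t ∈ Ici (0:ℝ), HasDerivWithinAt f (f' t) (Ici 0) t)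
    (hb : ∀ t ∈ Ici (0:ℝ), |f' t| ≤ L) :
    ∀ s ∈ Ici (0:ℝ), ∀ t ∈ Ici (0:ℝ), |f t - f s| ≤ L * |t - s| := by
  intro s hs t ht
  have := (convex_Ici (0:ℝ)).norm_image_sub_le_of_norm_hasDerivWithin_le hd
    (fun u hu => by simpa [Real.norm_eq_abs] using hb u hu) hs ht
  simpa [Real.norm_eq_abs] using this

private lemma lipOnIcc {f f' : ℝ → ℝ} {C a b : ℝ}
    (hd : ∀ t ∈ Icc a b, HasDerivWithinAt f (f' t) (Icc a b) t)
    (hb : ∀ t ∈ Icc a b, |f' t| ≤ C) :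
    ∀ s ∈ Icc a b, ∀ t ∈ Icc a b, |f t - f s| ≤ C * |t - s| := by
  intro s hs t ht
  have := (convex_Icc a b).norm_image_sub_le_of_norm_hasDerivWithin_le hd
    (fun u hu => by simpa [Real.norm_eq_abs] using hb u hu) hs ht
  simpa [Real.norm_eq_abs] using this

private lemma mono_down {f f' : ℝ → ℝ} {a b : ℝ} (h0 : 0 ≤ a) (hab : a ≤ b)
    (hd : ∀ t ∈ Ici (0:ℝ), HasDerivWithinAt f (f' t) (Ici 0) t)
    (hnp : ∀ t ∈ Icc a b, f' t ≤ 0) : f b ≤ f a := by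
  have hsub : Icc a b ⊆ Ici (0:ℝ) := fun u hu => le_trans h0 hu.1
  have hC : ContinuousOn f (Icc a b) := fun u hu =>
    ((hd u (hsub hu)).continuousWithinAt).mono hsub
  have key : AntitoneOn f (Icc a b) := by
    apply antitoneOn_of_hasDerivWithinAt_nonpos (convex_Icc a b) hC (f' := f')
    · intro u hu
      exact (hd u (hsub (interior_subset hu))).mono
        (fun v hv => hsub (interior_subset hv))
    · intro u hu
      exact hnp u (interior_subset hu)
  exact key ⟨le_refl a, hab⟩ ⟨hab, le_refl b⟩ hab

private lemma tendsto_zero_of_lyap {f v w : ℝ → ℝ} {L K m0 : ℝ} (hL : 0 < L) (hK : 0 < K)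
    (hm : ∀ t ∈ Ici (0:ℝ), m0 ≤ v t)
    (hlip : ∀ s ∈ Ici (0:ℝ), ∀ t ∈ Ici (0:ℝ), |f t - f s| ≤ L * |t - s|)
    (hdv : ∀ t ∈ Ici (0:ℝ), HasDerivWithinAt v (w t) (Ici 0) t)
    (hw : ∀ t ∈ Ici (0:ℝ), w t ≤ -K * (f t)^2) :
    Filter.Tendsto f atTop (nhds 0) := by
  have hanti : ∀ a b : ℝ, 0 ≤ a → a ≤ b → v b ≤ v a := by
    intro a b h0 hab
    refine mono_down h0 hab hdv ?_
    intro t ht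
    have ht0 : t ∈ Ici (0:ℝ) := le_trans h0 ht.1
    have := hw t ht0
    nlinarith [sq_nonneg (f t)]
  rw [Metric.tendsto_atTop]
  intro ε hε
  set δ : ℝ := ε / (2 * L) with hδdef
  have hδ : 0 < δ := by positivity
  set d : ℝ := K * ε ^ 2 / 4 * δ with hddef
  have hd : 0 < d := by positivity
  have step : ∀ t : ℝ, 0 ≤ t → ε ≤ |f t| → v (t + δ) ≤ v t - d := by
    intro t ht hft
    have hmono : v (t + δ) + K * ε ^ 2 / 4 * (t + δ) ≤ v t + K * ε ^ 2 / 4 * t := by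
      refine mono_down ht (by linarith) (f := fun s => v s + K * ε ^ 2 / 4 * s)
        (f' := fun s => w s + K * ε ^ 2 / 4) ?_ ?_
      · intro s hs
        have h1 : HasDerivWithinAt (fun s : ℝ => K * ε ^ 2 / 4 * s)
            (K * ε ^ 2 / 4) (Ici 0) s := by
          simpa using (hasDerivWithinAt_id s (Ici (0:ℝ))).const_mul (K * ε ^ 2 / 4)
        exact (hdv s hs).add h1
      · intro s hs
        have hs0 : (0:ℝ) ≤ s := le_trans ht hs.1
        have hfs : ε / 2 ≤ |f s| := by
          have := hlip t ht s hs0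
          have habs : |s - t| ≤ δ := by
            rw [abs_of_nonneg (by linarith [hs.1])]
            linarith [hs.2]
          have hLst : L * |s - t| ≤ L * δ :=
            mul_le_mul_of_nonneg_left habs (le_of_lt hL)
          have hLδ : L * δ = ε / 2 := by
            field_simp [hδdef]
            rw [hδdef]; field_simp
          have h2 : |f s - f t| ≤ ε / 2 := by
            calc |f s - f t| ≤ L * |s - t| := this
              _ ≤ L * δ := hLst
              _ = ε / 2 := hLδ
          have := abs_sub_abs_le_abs_sub (f t) (f s)
          rw [abs_sub_comm (f t) (f s)] at this
          linarith
        have hsq : ε ^ 2 / 4 ≤ (f s) ^ 2 := by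
          have h1 : (ε / 2) ^ 2 ≤ |f s| ^ 2 := by
            apply pow_le_pow_left₀ (by positivity) hfs
          rw [sq_abs] at h1
          nlinarith
        have := hw s hs0
        nlinarith
    have : v (t + δ) ≤ v t - K * ε ^ 2 / 4 * δ := by linarith
    simpa [hddef] using this
  set S : Set ℝ := v '' Ici 0 with hS
  have hSne : S.Nonempty := ⟨v 0, ⟨0, by simp, rfl⟩⟩
  have hSbd : BddBelow S := ⟨m0, by rintro y ⟨t, ht, rfl⟩; exact hm t ht⟩
  set l : ℝ := sInf S with hl
  have hlle : ∀ t : ℝ, 0 ≤ t → l ≤ v t := fun t ht => csInf_le hSbd ⟨t, ht, rfl⟩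
  obtain ⟨t0, ht0, hvt0⟩ : ∃ t0 : ℝ, 0 ≤ t0 ∧ v t0 < l + d := by
    by_contra h
    push_neg at h
    have : l + d ≤ l := le_csInf hSne (by rintro y ⟨t, ht, rfl⟩; exact h t ht)
    linarith
  refine ⟨t0, fun t ht => ?_⟩
  have ht0' : (0:ℝ) ≤ t := le_trans ht0 ht
  by_contra hcon
  push_neg at hcon
  have hcon' : ε ≤ |f t| := by
    rw [Real.dist_eq, sub_zero] at hcon
    exact hcon
  have h1 := step t ht0' hcon'
  have h2 := hanti t0 t ht0 ht
  have h3 := hlle (t + δ) (by linarith)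
  linarith

private lemma deriv_tendsto_zero {f f' f'' : ℝ → ℝ} {L : ℝ} (hL : 0 ≤ L)
    (hd : ∀ t ∈ Ici (0:ℝ), HasDerivWithinAt f (f' t) (Ici 0) t)
    (hd2 : ∀ t ∈ Ici (0:ℝ), HasDerivWithinAt f' (f'' t) (Ici 0) t)
    (hb : ∀ t ∈ Ici (0:ℝ), |f'' t| ≤ L)
    (hf0 : Filter.Tendsto f atTop (nhds 0)) : Filter.Tendsto f' atTop (nhds 0) := by
  rw [Metric.tendsto_atTop]
  intro ε hε
  set h : ℝ := ε / (2 * (L + 1)) with hhdef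
  have hh : 0 < h := by positivity
  have hev : ∀ᶠ t in atTop, |f t| ≤ ε * h / 8 := by
    have := Metric.tendsto_atTop.1 hf0 (ε * h / 8) (by positivity)
    obtain ⟨N, hN⟩ := this
    filter_upwards [eventually_ge_atTop N] with t ht
    have := hN t ht
    rw [Real.dist_eq, sub_zero] at this
    exact le_of_lt this
  rw [eventually_atTop] at hev
  obtain ⟨N, hN⟩ := hev
  refine ⟨max N 0, fun t ht => ?_⟩
  have htN : N ≤ t := le_trans (le_max_left _ _) ht
  have ht0 : (0:ℝ) ≤ t := le_trans (le_max_right _ _) ht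
  have key : |f (t + h) - f t - f' t * h| ≤ L * h * h := by
    set g : ℝ → ℝ := fun s => f s - f' t * s with hg
    have hdg : ∀ s ∈ Icc t (t + h), HasDerivWithinAt g (f' s - f' t) (Icc t (t + h)) s := by
      intro s hs
      have hs0 : s ∈ Ici (0:ℝ) := le_trans ht0 hs.1
      have h1 : HasDerivWithinAt (fun s : ℝ => f' t * s) (f' t) (Icc t (t+h)) s := by
        simpa using (hasDerivWithinAt_id s (Icc t (t+h))).const_mul (f' t)
      exact ((hd s hs0).mono (fun u hu => le_trans ht0 hu.1)).sub h1
    have hbg : ∀ s ∈ Icc t (t + h), |f' s - f' t| ≤ L * h := by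
      intro s hs
      have hs0 : s ∈ Ici (0:ℝ) := le_trans ht0 hs.1
      have hlip := lipOnIcc (f := f') (f' := f'') (a := 0) (b := t + h)
        (fun u hu => (hd2 u hu.1).mono (fun z hz => hz.1))
        (fun u hu => hb u hu.1) t ⟨ht0, by linarith⟩ s ⟨hs0, hs.2⟩
      calc |f' s - f' t| ≤ L * |s - t| := hlip
        _ ≤ L * h := by
            apply mul_le_mul_of_nonneg_left _ hL
            rw [abs_of_nonneg (by linarith [hs.1])]
            linarith [hs.2]
    have := lipOnIcc hdg hbg t ⟨le_refl t, by linarith⟩ (t + h) ⟨by linarith, le_refl _⟩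
    have habs : |t + h - t| = h := by rw [add_sub_cancel_left, abs_of_pos hh]
    rw [habs] at this
    have hgi : g (t + h) - g t = f (t + h) - f t - f' t * h := by
      simp only [hg]; ring
    rw [hgi] at this
    linarith [this]
  have h1 : |f t| ≤ ε * h / 8 := hN t htN
  have h2 : |f (t + h)| ≤ ε * h / 8 := hN (t + h) (by linarith)
  have h3 : |f' t| * h ≤ |f (t + h)| + |f t| + L * h * h := by
    have : |f' t * h| ≤ |f (t + h) - f t - f' t * h| + |f (t + h)| + |f t| := by
      have h5 : |f (t+h) - f t| ≤ |f (t+h)| + |f t| := abs_sub _ _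
      have h4 : f' t * h = (f (t+h) - f t) - (f (t + h) - f t - f' t * h) := by ring
      have h6 : |f' t * h| ≤ |f (t+h) - f t| + |f (t + h) - f t - f' t * h| := by
        calc |f' t * h| = |(f (t+h) - f t) - (f (t + h) - f t - f' t * h)| := by rw [← h4]
          _ ≤ _ := abs_sub _ _
      linarith
    rw [abs_mul, abs_of_pos hh] at this
    linarith
  have hLh : L * h ≤ ε / 2 := by
    have hid : h * (2 * (L + 1)) = ε := by
      rw [hhdef]; field_simp
    nlinarith [hh]
  have hfin : |f' t| * h ≤ (3 * ε / 4) * h := by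
    have hL2 : L * h * h ≤ (ε / 2) * h := mul_le_mul_of_nonneg_right hLh (le_of_lt hh)
    nlinarith
  have hft : |f' t| ≤ 3 * ε / 4 := le_of_mul_le_mul_right (by linarith [hfin]) hh
  rw [Real.dist_eq, sub_zero]
  calc |f' t| ≤ 3 * ε / 4 := hft
    _ < ε := by linarith

/-! ### The logistic-type Lyapunov integrand -/

noncomputable def phiLV (p u : ℝ) : ℝ := u - p - p * Real.log (u / p)

private lemma phiLV_nonneg {p u : ℝ} (hp : 0 < p) (hu : 0 < u) : 0 ≤ phiLV p u := by
  have h := Real.log_le_sub_one_of_pos (div_pos hu hp)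
  have : p * Real.log (u / p) ≤ p * (u / p - 1) := mul_le_mul_of_nonneg_left h (le_of_lt hp)
  have h2 : p * (u / p - 1) = u - p := by field_simp
  unfold phiLV
  nlinarith

private lemma phiLV_hasDerivAt {p u : ℝ} (hp : 0 < p) (hu : 0 < u) :
    HasDerivAt (phiLV p) (1 - p / u) u := by
  have heq : (fun w => w - p - p * (Real.log w - Real.log p)) =ᶠ[nhds u] phiLV p := by
    filter_upwards [Ioi_mem_nhds hu] with w hw
    unfold phiLV
    rw [Real.log_div (ne_of_gt hw) (ne_of_gt hp)]
  have hder : HasDerivAt (fun w => w - p - p * (Real.log w - Real.log p))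
      (1 - p * (1 / u)) u := by
    have h1 : HasDerivAt (fun w : ℝ => w - p) 1 u := (hasDerivAt_id u).sub_const p
    have h2 : HasDerivAt (fun w : ℝ => p * (Real.log w - Real.log p)) (p * (1 / u)) u := by
      have := (Real.hasDerivAt_log (ne_of_gt hu)).sub_const (Real.log p)
      simpa [one_div] using this.const_mul p
    exact h1.sub h2
  have := hder.congr_of_eventuallyEq heq.symm
  simpa [one_div, div_eq_mul_inv] using this

private lemma phiLV_bounds {p : ℝ} (hp : 0 < p) (B : ℝ) :
    ∃ m M : ℝ, 0 < m ∧ ∀ u, 0 < u → phiLV p u ≤ B → m ≤ u ∧ u ≤ M := by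
  refine ⟨p / Real.exp ((B + p) / p), 2 * B + 2 * p * Real.log 2, by positivity, ?_⟩
  intro u hu hB
  have hlu : Real.log (u / p) = Real.log u - Real.log p := Real.log_div hu.ne' hp.ne'
  have hpu : Real.log (p / u) = Real.log p - Real.log u := Real.log_div hp.ne' hu.ne'
  have hphi2 : phiLV p u = u - p + p * Real.log (p / u) := by
    unfold phiLV; rw [hlu, hpu]; ring
  constructor
  · have hlog : Real.log (p / u) ≤ (B + p) / p := by
      have h1 : p * Real.log (p / u) ≤ B + p := by
        have := hphi2 ▸ hB
        linarith
      exact (le_div_iff₀' hp).2 h1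
    have h2 : p / u ≤ Real.exp ((B + p) / p) := by
      calc p / u = Real.exp (Real.log (p / u)) := (Real.exp_log (div_pos hp hu)).symm
        _ ≤ Real.exp ((B + p) / p) := Real.exp_le_exp.2 hlog
    rw [div_le_iff₀ hu] at h2
    rw [div_le_iff₀ (Real.exp_pos _)]
    linarith [h2]
  · have hlog2 : Real.log u ≤ u / (2 * p) - 1 + Real.log (2 * p) := by
      have h1 : Real.log (u / (2 * p)) ≤ u / (2 * p) - 1 :=
        Real.log_le_sub_one_of_pos (by positivity)
      have h2 : Real.log (u / (2 * p)) = Real.log u - Real.log (2 * p) := by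
        rw [Real.log_div (ne_of_gt hu) (by positivity)]
      linarith [h1, h2.symm.le, h2.le]
    have hphi : phiLV p u = u - p - p * Real.log u + p * Real.log p := by
      unfold phiLV
      rw [Real.log_div (ne_of_gt hu) (ne_of_gt hp)]
      ring
    have hlog3 : Real.log (2 * p) = Real.log 2 + Real.log p := by
      rw [Real.log_mul (by norm_num) (ne_of_gt hp)]
    have h3 : p * Real.log u ≤ u / 2 - p + p * Real.log 2 + p * Real.log p := by
      have := mul_le_mul_of_nonneg_left hlog2 (le_of_lt hp)
      rw [hlog3] at this
      have hid : p * (u / (2 * p) - 1 + (Real.log 2 + Real.log p))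
          = u / 2 - p + p * Real.log 2 + p * Real.log p := by
        field_simp
        ring
      linarith [hid.le, hid.ge]
    linarith [hB, hphi.le, hphi.ge, h3]

/-! ### The weights `c_i` and the linearized field -/

noncomputable def cLV (ta : ℕ → ℕ → ℝ) : ℕ → ℝ :=
  fun i => ∏ j ∈ Finset.Ico 1 i, (ta j (j + 1) / ta (j + 1) j)

lemma cLV_one (ta : ℕ → ℕ → ℝ) : cLV ta 1 = 1 := by simp [cLV]

lemma cLV_succ (ta : ℕ → ℕ → ℝ) {i : ℕ} (hi : 1 ≤ i) :
    cLV ta (i + 1) = cLV ta i * (ta i (i + 1) / ta (i + 1) i) := by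
  unfold cLV; rw [Finset.prod_Ico_succ_top hi]

lemma cLV_pos {n : ℕ} (ta : ℕ → ℕ → ℝ)
    (hlow : ∀ i, 2 ≤ i → i ≤ n → 0 < ta i (i - 1))
    (hup : ∀ i, 1 ≤ i → i ≤ n - 1 → 0 < ta i (i + 1)) :
    ∀ i, 1 ≤ i → i ≤ n → 0 < cLV ta i := by
  intro i h1 h2
  apply Finset.prod_pos
  intro j hj
  rw [Finset.mem_Ico] at hj
  have hj2 : j + 1 - 1 = j := by omega
  exact div_pos (hup j hj.1 (by omega))
    (by have := hlow (j+1) (by omega) (by omega); rwa [hj2] at this)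

lemma cLV_id {n : ℕ} (ta : ℕ → ℕ → ℝ)
    (hlow : ∀ i, 2 ≤ i → i ≤ n → 0 < ta i (i - 1))
    (hup : ∀ i, 1 ≤ i → i ≤ n - 1 → 0 < ta i (i + 1)) :
    ∀ i, 1 ≤ i → i + 1 ≤ n → cLV ta i * ta i (i + 1) = cLV ta (i + 1) * ta (i + 1) i := by
  intro i h1 h2
  rw [cLV_succ ta h1]
  have hne : ta (i + 1) i ≠ 0 := by
    have hj2 : i + 1 - 1 = i := by omega
    have := hlow (i+1) (by omega) (by omega)
    rw [hj2] at this
    exact this.ne'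
  field_simp

def cmLV (ta : ℕ → ℕ → ℝ) (k : ℕ) : ℝ := if k = 1 then 0 else ta k (k - 1)
def cpLV (n : ℕ) (ta : ℕ → ℕ → ℝ) (k : ℕ) : ℝ := if k = n then 0 else ta k (k + 1)
def kpLV (ta : ℕ → ℕ → ℝ) (k : ℕ) : ℝ := if k = 1 then ta 1 0 else -ta k 0

lemma Ft_eq {n : ℕ} (hn : 2 ≤ n) (ta : ℕ → ℕ → ℝ) (y : ℕ → ℝ) :
    ∀ k, 1 ≤ k → k ≤ n →
      Ft n ta y k = kpLV ta k + cmLV ta k * y (k - 1) - ta k k * y k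
        - cpLV n ta k * y (k + 1) := by
  intro k h1 h2
  by_cases hk1 : k = 1
  · subst hk1
    have : (1:ℕ) ≠ n := by omega
    simp [Ft, cmLV, cpLV, kpLV, this]
  · by_cases hkn : k = n
    · subst hkn
      simp [Ft, cmLV, cpLV, kpLV, hk1]
    · simp [Ft, cmLV, cpLV, kpLV, hk1, hkn]

lemma Ft_lin {n : ℕ} (hn : 2 ≤ n) (ta : ℕ → ℕ → ℝ) (pstar : ℕ → ℝ)
    (hzero : ∀ i, 1 ≤ i → i ≤ n → Ft n ta pstar i = 0) (y : ℕ → ℝ) :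
    ∀ k, 1 ≤ k → k ≤ n →
      Ft n ta y k = cmLV ta k * (y (k - 1) - pstar (k - 1)) - ta k k * (y k - pstar k)
        - cpLV n ta k * (y (k + 1) - pstar (k + 1)) := by
  intro k h1 h2
  have hy := Ft_eq hn ta y k h1 h2
  have hp := Ft_eq hn ta pstar k h1 h2
  have h0 := hzero k h1 h2
  linear_combination hy + h0 - hp

lemma sum_key {n : ℕ} (hn : 2 ≤ n) (ta : ℕ → ℕ → ℝ)
    (hlow : ∀ i, 2 ≤ i → i ≤ n → 0 < ta i (i - 1))
    (hup : ∀ i, 1 ≤ i → i ≤ n - 1 → 0 < ta i (i + 1))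
    (pstar : ℕ → ℝ)
    (hzero : ∀ i, 1 ≤ i → i ≤ n → Ft n ta pstar i = 0) (y : ℕ → ℝ) :
    ∑ i ∈ Finset.Icc 1 n, cLV ta i * (y i - pstar i) * Ft n ta y i
      = -∑ i ∈ Finset.Icc 1 n, cLV ta i * ta i i * (y i - pstar i) ^ 2 := by
  set e : ℕ → ℝ := fun i => y i - pstar i with he
  set h : ℕ → ℝ := fun i => cLV ta i * ta i (i + 1) * e i * e (i + 1) with hh
  set H : ℕ → ℝ := fun i => if 1 ≤ i ∧ i ≤ n - 1 then h i else 0 with hH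
  have hterm : ∀ i ∈ Finset.Icc 1 n, cLV ta i * e i * Ft n ta y i
      = -(cLV ta i * ta i i * e i ^ 2) + (H (i - 1) - H i) := by
    intro i hi
    rw [Finset.mem_Icc] at hi
    have hF := Ft_lin hn ta pstar hzero y i hi.1 hi.2
    by_cases hi1 : i = 1
    · subst hi1
      have h10 : ¬ ((1:ℕ) ≤ 0 ∧ (0:ℕ) ≤ n - 1) := by omega
      have h11 : (1:ℕ) ≤ 1 ∧ (1:ℕ) ≤ n - 1 := by omega
      rw [hF]
      simp only [hH, hh, he, h10, h11, if_true, if_false, cmLV, cpLV, if_pos rfl]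
      have : (1:ℕ) ≠ n := by omega
      rw [if_neg this]
      ring_nf
      simp
      ring
    · obtain ⟨j, rfl⟩ : ∃ j, i = j + 1 := ⟨i - 1, by omega⟩
      have hj1 : 1 ≤ j := by omega
      have hid := cLV_id ta hlow hup j hj1 (by omega)
      have hsub : j + 1 - 1 = j := by omega
      by_cases hin : j + 1 = n
      · have hHn : H (j + 1) = 0 := by
          rw [hH]; simp only; rw [if_neg (by omega)]
        have hHj : H j = h j := by
          rw [hH]; simp only; rw [if_pos (by omega)]
        rw [hF, hsub, hHn, hHj, hh]
        simp only [cmLV, cpLV, if_neg hi1, if_pos hin, he, hsub]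
        linear_combination (-(y j - pstar j) * (y (j+1) - pstar (j+1))) * hid
      · have hHn : H (j + 1) = h (j + 1) := by
          rw [hH]; simp only; rw [if_pos (by omega)]
        have hHj : H j = h j := by
          rw [hH]; simp only; rw [if_pos (by omega)]
        rw [hF, hsub, hHn, hHj, hh]
        simp only [cmLV, cpLV, if_neg hi1, if_neg hin, he, hsub]
        linear_combination (-(y j - pstar j) * (y (j+1) - pstar (j+1))) * hid
  have htel : ∑ i ∈ Finset.Icc 1 n, (H (i - 1) - H i) = 0 := by
    have h1 : Finset.Icc 1 n = Finset.Ico 1 (n + 1) := by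
      rw [Finset.Ico_add_one_right_eq_Icc]
    rw [h1, Finset.sum_Ico_eq_sum_range]
    have h2 : n + 1 - 1 = n := by omega
    rw [h2]
    have h3 : ∀ j, H (1 + j - 1) - H (1 + j) = H j - H (j + 1) := by
      intro j
      congr 1
      · congr 1; omega
      · congr 1; omega
    calc ∑ j ∈ Finset.range n, (H (1 + j - 1) - H (1 + j))
        = ∑ j ∈ Finset.range n, (H j - H (j + 1)) := Finset.sum_congr rfl (fun j _ => h3 j)
      _ = H 0 - H n := Finset.sum_range_sub' H n
      _ = 0 := by
          rw [hH]; simp only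
          rw [if_neg (by omega), if_neg (by omega)]
          ring
  calc ∑ i ∈ Finset.Icc 1 n, cLV ta i * (y i - pstar i) * Ft n ta y i
      = ∑ i ∈ Finset.Icc 1 n, (-(cLV ta i * ta i i * e i ^ 2) + (H (i - 1) - H i)) :=
        Finset.sum_congr rfl hterm
    _ = ∑ i ∈ Finset.Icc 1 n, -(cLV ta i * ta i i * e i ^ 2)
        + ∑ i ∈ Finset.Icc 1 n, (H (i - 1) - H i) := Finset.sum_add_distrib
    _ = -∑ i ∈ Finset.Icc 1 n, cLV ta i * ta i i * (y i - pstar i) ^ 2 := by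
        rw [htel, add_zero, ← Finset.sum_neg_distrib]

end LVaux

set_option maxHeartbeats 1600000 in
/-- Global asymptotic stability of the positive equilibrium `p*` of the deterministic
Lotka–Volterra food chain when `δ̃(n) > 0`: every differentiable positive solution of
`x_i' = x_i F̃_i(x)` on `[0,∞)` converges to `p*`. -/
theorem stmt15 (n : ℕ) (hn : 2 ≤ n) (ta : ℕ → ℕ → ℝ)
    (hi0 : ∀ i, 2 ≤ i → i ≤ n → 0 < ta i 0)
    (h11 : 0 < ta 1 1)
    (hii : ∀ i, 2 ≤ i → i ≤ n → 0 ≤ ta i i)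
    (hlow : ∀ i, 2 ≤ i → i ≤ n → 0 < ta i (i - 1))
    (hup : ∀ i, 1 ≤ i → i ≤ n - 1 → 0 < ta i (i + 1))
    (hdelta : 0 < deltaT ta n)
    (pstar : ℕ → ℝ)
    (hpos : ∀ i, 1 ≤ i → i ≤ n → 0 < pstar i)
    (hzero : ∀ i, 1 ≤ i → i ≤ n → Ft n ta pstar i = 0)
    (x : ℝ → ℕ → ℝ)
    (hx_pos : ∀ t, 0 ≤ t → ∀ i, 1 ≤ i → i ≤ n → 0 < x t i)
    (hx_ode : ∀ i, 1 ≤ i → i ≤ n → ∀ t, 0 ≤ t →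
      HasDerivWithinAt (fun s => x s i) (x t i * Ft n ta (x t) i) (Set.Ici 0) t) :
    ∀ i, 1 ≤ i → i ≤ n →
      Filter.Tendsto (fun t => x t i) Filter.atTop (nhds (pstar i)) := by
  classical
  have hne : (Finset.Icc 1 n).Nonempty := ⟨1, Finset.mem_Icc.2 ⟨le_rfl, by omega⟩⟩
  have haii : ∀ i, 1 ≤ i → i ≤ n → 0 ≤ ta i i := by
    intro i h1 h2
    by_cases h : i = 1
    · subst h; exact h11.le
    · exact hii i (by omega) h2
  have hcpos := cLV_pos ta hlow hup
  set v : ℝ → ℝ := fun t => ∑ i ∈ Finset.Icc 1 n, cLV ta i * phiLV (pstar i) (x t i) with hvdef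
  set w : ℝ → ℝ :=
    fun t => -∑ i ∈ Finset.Icc 1 n, cLV ta i * ta i i * (x t i - pstar i) ^ 2 with hwdef
  have hv : ∀ t ∈ Set.Ici (0:ℝ), HasDerivWithinAt v (w t) (Set.Ici 0) t := by
    intro t ht
    have hterm : ∀ i ∈ Finset.Icc 1 n, HasDerivWithinAt
        (fun s => cLV ta i * phiLV (pstar i) (x s i))
        (cLV ta i * ((x t i - pstar i) * Ft n ta (x t) i)) (Set.Ici 0) t := by
      intro i hi
      rw [Finset.mem_Icc] at hi
      have hxp := hx_pos t ht i hi.1 hi.2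
      have hphi := phiLV_hasDerivAt (hpos i hi.1 hi.2) hxp
      have hcomp := hphi.comp_hasDerivWithinAt t (hx_ode i hi.1 hi.2 t ht)
      have heq : (1 - pstar i / x t i) * (x t i * Ft n ta (x t) i)
          = (x t i - pstar i) * Ft n ta (x t) i := by
        have h0 := hxp.ne'
        field_simp
      rw [heq] at hcomp
      exact hcomp.const_mul _
    have hsum := HasDerivWithinAt.sum hterm
    have hkey := sum_key hn ta hlow hup pstar hzero (x t)
    have heq2 : ∑ i ∈ Finset.Icc 1 n, cLV ta i * ((x t i - pstar i) * Ft n ta (x t) i)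
        = w t := by
      rw [hwdef]
      simp only
      rw [← hkey]
      apply Finset.sum_congr rfl
      intro i _
      ring
    rw [heq2] at hsum
    exact HasDerivWithinAt.congr hsum (fun s _ => by simp [hvdef, Finset.sum_apply])
      (by simp [hvdef, Finset.sum_apply])
  have hw0 : ∀ t ∈ Set.Ici (0:ℝ), w t ≤ 0 := by
    intro t ht
    rw [hwdef]
    simp only [neg_nonpos]
    apply Finset.sum_nonneg
    intro i hi
    rw [Finset.mem_Icc] at hi
    have h1 := hcpos i hi.1 hi.2
    have h2 := haii i hi.1 hi.2
    positivity
  have hvmono : ∀ t, 0 ≤ t → v t ≤ v 0 := fun t ht =>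
    mono_down le_rfl ht hv (fun s hs => hw0 s hs.1)
  have hvnn : ∀ t ∈ Set.Ici (0:ℝ), (0:ℝ) ≤ v t := by
    intro t ht
    apply Finset.sum_nonneg
    intro i hi
    rw [Finset.mem_Icc] at hi
    exact mul_nonneg (hcpos i hi.1 hi.2).le
      (phiLV_nonneg (hpos i hi.1 hi.2) (hx_pos t ht i hi.1 hi.2))
  have hbnd : ∀ i, ∃ m M : ℝ, 0 < m ∧
      (1 ≤ i → i ≤ n → ∀ t, 0 ≤ t → m ≤ x t i ∧ x t i ≤ M) := by
    intro i
    by_cases hi : 1 ≤ i ∧ i ≤ n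
    · obtain ⟨m, M, hm, hmb⟩ := phiLV_bounds (hpos i hi.1 hi.2) (v 0 / cLV ta i)
      refine ⟨m, M, hm, fun _ _ t ht => hmb _ (hx_pos t ht i hi.1 hi.2) ?_⟩
      have hc := hcpos i hi.1 hi.2
      rw [le_div_iff₀' hc]
      have h1 : cLV ta i * phiLV (pstar i) (x t i) ≤ v t := by
        apply Finset.single_le_sum
          (f := fun j => cLV ta j * phiLV (pstar j) (x t j)) ?_ (Finset.mem_Icc.2 hi)
        intro j hj
        rw [Finset.mem_Icc] at hj
        exact mul_nonneg (hcpos j hj.1 hj.2).le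
          (phiLV_nonneg (hpos j hj.1 hj.2) (hx_pos t ht j hj.1 hj.2))
      exact le_trans h1 (hvmono t ht)
    · exact ⟨1, 1, one_pos, fun h1 h2 => absurd ⟨h1, h2⟩ hi⟩
  choose mm MM hmm hbd using hbnd
  set Emax : ℝ := (Finset.Icc 1 n).sup' hne (fun i => MM i + pstar i) with hEdef
  have hEb : ∀ i, 1 ≤ i → i ≤ n → ∀ t, 0 ≤ t → |x t i - pstar i| ≤ Emax := by
    intro i h1 h2 t ht
    have hb := hbd i h1 h2 t ht
    have hp := hpos i h1 h2
    have hx := hx_pos t ht i h1 h2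
    have h3 : |x t i - pstar i| ≤ MM i + pstar i := by
      rw [abs_le]
      constructor
      · nlinarith [hb.1, hb.2, hmm i]
      · nlinarith [hb.1, hb.2, hmm i]
    exact le_trans h3 (Finset.le_sup' (fun i => MM i + pstar i) (Finset.mem_Icc.2 ⟨h1, h2⟩))
  have hE0 : 0 ≤ Emax := le_trans (abs_nonneg _) (hEb 1 le_rfl (by omega) 0 le_rfl)
  set Mmax : ℝ := (Finset.Icc 1 n).sup' hne MM with hMdef
  have hMb : ∀ i, 1 ≤ i → i ≤ n → ∀ t, 0 ≤ t → |x t i| ≤ Mmax := by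
    intro i h1 h2 t ht
    have hb := hbd i h1 h2 t ht
    have hx := hx_pos t ht i h1 h2
    rw [abs_of_pos hx]
    exact le_trans hb.2 (Finset.le_sup' MM (Finset.mem_Icc.2 ⟨h1, h2⟩))
  have hM0 : 0 ≤ Mmax := le_trans (abs_nonneg _) (hMb 1 le_rfl (by omega) 0 le_rfl)
  set CA : ℝ := ∑ i ∈ Finset.Icc 1 n, (|ta i (i - 1)| + |ta i i| + |ta i (i + 1)|) with hCAdef
  have hCAb : ∀ i, 1 ≤ i → i ≤ n →
      |ta i (i - 1)| ≤ CA ∧ |ta i i| ≤ CA ∧ |ta i (i + 1)| ≤ CA := by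
    intro i h1 h2
    have hsum : |ta i (i - 1)| + |ta i i| + |ta i (i + 1)| ≤ CA := by
      apply Finset.single_le_sum
        (f := fun i => |ta i (i - 1)| + |ta i i| + |ta i (i + 1)|) ?_
        (Finset.mem_Icc.2 ⟨h1, h2⟩)
      intro j _
      positivity
    refine ⟨?_, ?_, ?_⟩ <;> [skip; skip; skip] <;>
      (try (have := abs_nonneg (ta i (i - 1)))) <;>
      (try (have := abs_nonneg (ta i i))) <;>
      (try (have := abs_nonneg (ta i (i + 1)))) <;> linarith
  have hCA0 : 0 ≤ CA := le_trans (abs_nonneg _) (hCAb 1 le_rfl (by omega)).1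
  have hcmb : ∀ k, 1 ≤ k → k ≤ n → |cmLV ta k| ≤ CA := by
    intro k h1 h2
    by_cases hk : k = 1
    · simp [cmLV, hk, hCA0]
    · simpa [cmLV, hk] using (hCAb k h1 h2).1
  have hcpb : ∀ k, 1 ≤ k → k ≤ n → |cpLV n ta k| ≤ CA := by
    intro k h1 h2
    by_cases hk : k = n
    · simp [cpLV, hk, hCA0]
    · simpa [cpLV, hk] using (hCAb k h1 h2).2.2
  have hFb : ∀ k, 1 ≤ k → k ≤ n → ∀ t, 0 ≤ t →
      |Ft n ta (x t) k| ≤ 3 * (CA * Emax) := by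
    intro k h1 h2 t ht
    rw [Ft_lin hn ta pstar hzero (x t) k h1 h2]
    have hm : |cmLV ta k * (x t (k - 1) - pstar (k - 1))| ≤ CA * Emax := by
      by_cases hk : k = 1
      · simp [cmLV, hk]
        positivity
      · rw [abs_mul]
        exact mul_le_mul (hcmb k h1 h2) (hEb (k - 1) (by omega) (by omega) t ht)
          (abs_nonneg _) hCA0
    have hd : |ta k k * (x t k - pstar k)| ≤ CA * Emax := by
      rw [abs_mul]
      exact mul_le_mul (hCAb k h1 h2).2.1 (hEb k h1 h2 t ht) (abs_nonneg _) hCA0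
    have hp : |cpLV n ta k * (x t (k + 1) - pstar (k + 1))| ≤ CA * Emax := by
      by_cases hk : k = n
      · simp [cpLV, hk]
        positivity
      · rw [abs_mul]
        exact mul_le_mul (hcpb k h1 h2) (hEb (k + 1) (by omega) (by omega) t ht)
          (abs_nonneg _) hCA0
    calc |cmLV ta k * (x t (k - 1) - pstar (k - 1)) - ta k k * (x t k - pstar k)
          - cpLV n ta k * (x t (k + 1) - pstar (k + 1))|
        ≤ |cmLV ta k * (x t (k - 1) - pstar (k - 1)) - ta k k * (x t k - pstar k)|
          + |cpLV n ta k * (x t (k + 1) - pstar (k + 1))| := abs_sub _ _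
      _ ≤ |cmLV ta k * (x t (k - 1) - pstar (k - 1))| + |ta k k * (x t k - pstar k)|
          + |cpLV n ta k * (x t (k + 1) - pstar (k + 1))| := by
            have := abs_sub (cmLV ta k * (x t (k - 1) - pstar (k - 1)))
              (ta k k * (x t k - pstar k))
            linarith
      _ ≤ 3 * (CA * Emax) := by linarith
  set CF : ℝ := 3 * (CA * Emax) with hCFdef
  have hCF0 : 0 ≤ CF := by positivity
  set C2 : ℝ := Mmax * CF with hC2def
  have hC20 : 0 ≤ C2 := by positivity
  have hdxb : ∀ k, 1 ≤ k → k ≤ n → ∀ t, 0 ≤ t →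
      |x t k * Ft n ta (x t) k| ≤ C2 := by
    intro k h1 h2 t ht
    rw [abs_mul]
    exact mul_le_mul (hMb k h1 h2 t ht) (hFb k h1 h2 t ht) (abs_nonneg _) hM0
  have hlip1 : ∀ s ∈ Set.Ici (0:ℝ), ∀ t ∈ Set.Ici (0:ℝ),
      |(x t 1 - pstar 1) - (x s 1 - pstar 1)| ≤ (C2 + 1) * |t - s| := by
    apply lipOn (f' := fun t => x t 1 * Ft n ta (x t) 1)
    · intro t ht
      exact (hx_ode 1 le_rfl (by omega) t ht).sub_const _
    · intro t ht
      exact le_trans (hdxb 1 le_rfl (by omega) t ht) (by linarith)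
  have base : Filter.Tendsto (fun t => x t 1 - pstar 1) Filter.atTop (nhds 0) := by
    apply tendsto_zero_of_lyap (L := C2 + 1) (K := ta 1 1) (m0 := 0)
      (by linarith) h11 hvnn hlip1 hv
    intro t ht
    have h1 : cLV ta 1 * ta 1 1 * (x t 1 - pstar 1) ^ 2
        ≤ ∑ i ∈ Finset.Icc 1 n, cLV ta i * ta i i * (x t i - pstar i) ^ 2 := by
      apply Finset.single_le_sum
        (f := fun i => cLV ta i * ta i i * (x t i - pstar i) ^ 2) ?_
        (Finset.mem_Icc.2 ⟨le_rfl, by omega⟩)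
      intro j hj
      rw [Finset.mem_Icc] at hj
      have := hcpos j hj.1 hj.2
      have := haii j hj.1 hj.2
      positivity
    rw [cLV_one, one_mul] at h1
    rw [hwdef]
    simp only
    linarith
  have mainind : ∀ k, 1 ≤ k → ∀ j, 1 ≤ j → j ≤ k → k ≤ n →
      Filter.Tendsto (fun t => x t j - pstar j) Filter.atTop (nhds 0) := by
    intro k hk
    induction k, hk using Nat.le_induction with
    | base =>
      intro j hj1 hj2 _
      have : j = 1 := by omega
      subst this
      exact base
    | succ k hk ih =>
      intro j hj1 hj2 hkn
      by_cases hjk : j ≤ k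
      · exact ih j hj1 hjk (by omega)
      · have hj : j = k + 1 := by omega
        subst hj
        have hk1n : k ≤ n := by omega
        have hek : Filter.Tendsto (fun t => x t k - pstar k) Filter.atTop (nhds 0) :=
          ih k hk le_rfl hk1n
        set zk : ℝ → ℝ := fun t => if k = 1 then (0:ℝ) else x t (k - 1) with hzkdef
        set zdk : ℝ → ℝ :=
          fun t => if k = 1 then (0:ℝ) else x t (k - 1) * Ft n ta (x t) (k - 1) with hzdkdef
        have hz : ∀ t ∈ Set.Ici (0:ℝ), HasDerivWithinAt zk (zdk t) (Set.Ici 0) t := by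
          intro t ht
          by_cases hk1 : k = 1
          · simp only [hzkdef, hzdkdef, if_pos hk1]
            exact hasDerivWithinAt_const t _ 0
          · simp only [hzkdef, hzdkdef, if_neg hk1]
            exact hx_ode (k - 1) (by omega) (by omega) t ht
        have hzb : ∀ t, 0 ≤ t → |zdk t| ≤ C2 := by
          intro t ht
          by_cases hk1 : k = 1
          · simp only [hzdkdef, if_pos hk1, abs_zero]
            exact hC20
          · simp only [hzdkdef, if_neg hk1]
            exact hdxb (k - 1) (by omega) (by omega) t ht
        have hFt_fun : ∀ s : ℝ, Ft n ta (x s) k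
            = kpLV ta k + cmLV ta k * zk s - ta k k * x s k
              - cpLV n ta k * x s (k + 1) := by
          intro s
          rw [Ft_eq hn ta (x s) k hk hk1n]
          by_cases hk1 : k = 1
          · simp [hzkdef, cmLV, hk1]
          · simp [hzkdef, if_neg hk1]
        set Gt : ℝ → ℝ := fun t => cmLV ta k * zdk t
          - ta k k * (x t k * Ft n ta (x t) k)
          - cpLV n ta k * (x t (k + 1) * Ft n ta (x t) (k + 1)) with hGtdef
        have hFd : ∀ t ∈ Set.Ici (0:ℝ),
            HasDerivWithinAt (fun s => Ft n ta (x s) k) (Gt t) (Set.Ici 0) t := by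
          intro t ht
          have h1 := ((hz t ht).const_mul (cmLV ta k)).const_add (kpLV ta k)
          have h2 := (hx_ode k hk hk1n t ht).const_mul (ta k k)
          have h3 := (hx_ode (k + 1) (by omega) hkn t ht).const_mul (cpLV n ta k)
          have h4 := (h1.sub h2).sub h3
          exact h4.congr (fun s _ => hFt_fun s) (hFt_fun t)
        set DK : ℝ := C2 * CF + Mmax * (CA * C2 + CA * C2 + CA * C2) with hDKdef
        have hDK0 : 0 ≤ DK := by positivity
        have hd2 : ∀ t ∈ Set.Ici (0:ℝ), HasDerivWithinAt
            (fun s => x s k * Ft n ta (x s) k)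
            (x t k * Ft n ta (x t) k * Ft n ta (x t) k + x t k * Gt t) (Set.Ici 0) t :=
          fun t ht => (hx_ode k hk hk1n t ht).mul (hFd t ht)
        have hbD : ∀ t ∈ Set.Ici (0:ℝ),
            |x t k * Ft n ta (x t) k * Ft n ta (x t) k + x t k * Gt t| ≤ DK := by
          intro t ht
          have e1 : |x t k * Ft n ta (x t) k| ≤ C2 := hdxb k hk hk1n t ht
          have e2 : |Ft n ta (x t) k| ≤ CF := hFb k hk hk1n t ht
          have e3 : |x t k| ≤ Mmax := hMb k hk hk1n t ht
          have e4 : |zdk t| ≤ C2 := hzb t ht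
          have e6 : |x t (k + 1) * Ft n ta (x t) (k + 1)| ≤ C2 :=
            hdxb (k + 1) (by omega) hkn t ht
          have i1 : |cmLV ta k * zdk t| ≤ CA * C2 := by
            rw [abs_mul]
            exact mul_le_mul (hcmb k hk hk1n) e4 (abs_nonneg _) hCA0
          have i2 : |ta k k * (x t k * Ft n ta (x t) k)| ≤ CA * C2 := by
            rw [abs_mul]
            exact mul_le_mul (hCAb k hk hk1n).2.1 e1 (abs_nonneg _) hCA0
          have i3 : |cpLV n ta k * (x t (k + 1) * Ft n ta (x t) (k + 1))| ≤ CA * C2 := by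
            rw [abs_mul]
            exact mul_le_mul (hcpb k hk hk1n) e6 (abs_nonneg _) hCA0
          have inner : |Gt t| ≤ CA * C2 + CA * C2 + CA * C2 := by
            rw [hGtdef]
            simp only
            have t1 := abs_sub (cmLV ta k * zdk t)
              (ta k k * (x t k * Ft n ta (x t) k))
            have t2 := abs_sub
              (cmLV ta k * zdk t - ta k k * (x t k * Ft n ta (x t) k))
              (cpLV n ta k * (x t (k + 1) * Ft n ta (x t) (k + 1)))
            linarith
          have j1 : |x t k * Ft n ta (x t) k * Ft n ta (x t) k| ≤ C2 * CF := by
            rw [abs_mul]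
            exact mul_le_mul e1 e2 (abs_nonneg _) hC20
          have j2 : |x t k * Gt t| ≤ Mmax * (CA * C2 + CA * C2 + CA * C2) := by
            rw [abs_mul]
            exact mul_le_mul e3 inner (abs_nonneg _) hM0
          calc |x t k * Ft n ta (x t) k * Ft n ta (x t) k + x t k * Gt t|
              ≤ |x t k * Ft n ta (x t) k * Ft n ta (x t) k| + |x t k * Gt t| := abs_add_le _ _
            _ ≤ DK := by rw [hDKdef]; linarith
        have hf'0 : Filter.Tendsto (fun t => x t k * Ft n ta (x t) k)
            Filter.atTop (nhds 0) := by
          apply deriv_tendsto_zero (L := DK) hDK0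
            (fun t ht => (hx_ode k hk hk1n t ht).sub_const (pstar k)) hd2 hbD hek
        have hFt0 : Filter.Tendsto (fun t => Ft n ta (x t) k) Filter.atTop (nhds 0) := by
          have hmk := hmm k
          apply squeeze_zero_norm' (a := fun t => |x t k * Ft n ta (x t) k| / mm k)
          · filter_upwards [Filter.eventually_ge_atTop (0:ℝ)] with t ht
            have hxk := (hbd k hk hk1n t ht).1
            have hxpos := hx_pos t ht k hk hk1n
            rw [Real.norm_eq_abs, le_div_iff₀ hmk]
            calc |Ft n ta (x t) k| * mm k ≤ |Ft n ta (x t) k| * x t k :=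
                mul_le_mul_of_nonneg_left hxk (abs_nonneg _)
              _ = |x t k * Ft n ta (x t) k| := by
                  rw [abs_mul, abs_of_pos hxpos]; ring
          · have habs : Filter.Tendsto (fun t => |x t k * Ft n ta (x t) k|)
                Filter.atTop (nhds 0) := by
              have := hf'0.abs
              simpa using this
            have := habs.div_const (mm k)
            simpa using this
        have hcm0 : Filter.Tendsto (fun t => cmLV ta k * (x t (k - 1) - pstar (k - 1)))
            Filter.atTop (nhds 0) := by
          by_cases hk1 : k = 1
          · simp only [cmLV, if_pos hk1, zero_mul]
            exact tendsto_const_nhds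
          · have h := (ih (k - 1) (by omega) (by omega) hk1n).const_mul (cmLV ta k)
            simpa using h
        have hd0 : Filter.Tendsto (fun t => ta k k * (x t k - pstar k))
            Filter.atTop (nhds 0) := by
          simpa using hek.const_mul (ta k k)
        have hcp0 : Filter.Tendsto
            (fun t => cpLV n ta k * (x t (k + 1) - pstar (k + 1)))
            Filter.atTop (nhds 0) := by
          have h := (hcm0.sub hd0).sub hFt0
          simp only [sub_zero] at h
          apply Filter.Tendsto.congr ?_ h
          intro t
          have hlin := Ft_lin hn ta pstar hzero (x t) k hk hk1n
          linarith
        have hcpval : cpLV n ta k = ta k (k + 1) := by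
          simp [cpLV, show k ≠ n by omega]
        have hcpne : cpLV n ta k ≠ 0 := by
          rw [hcpval]
          exact (hup k hk (by omega)).ne'
        have h := hcp0.const_mul (cpLV n ta k)⁻¹
        rw [mul_zero] at h
        apply Filter.Tendsto.congr ?_ h
        intro t
        rw [inv_mul_cancel_left₀ hcpne]
  intro i h1 h2
  have hi := mainind n (by omega) i h1 h2 le_rfl
  have h := hi.add_const (pstar i)
  simp only [sub_add_cancel, zero_add] at h
  exact h
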